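/- Let ζ be a standard complex Gaussian random variable. For every t > 0, E[log|1 + ζ/t|] > e^{-t²}/(2(t²+1)). -/

import Mathlib

open MeasureTheory Real Set intervalIntegral Filter

lemma slit_aux {a z : ℂ} (ha : ‖a‖ < 1) (hz : ‖z‖ ≤ 1) : 1 + a * z ∈ Complex.slitPlane := by
  refine Complex.mem_slitPlane_iff.2 (Or.inl ?_)
  have h1 : ‖a * z‖ < 1 := by
    calc ‖a * z‖ = ‖a‖ * ‖z‖ := norm_mul a z
    _ ≤ ‖a‖ * 1 := by nlinarith [norm_nonneg a]
    _ < 1 := by simpa using ha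
  have h2 : |(a*z).re| < 1 := lt_of_le_of_lt (Complex.abs_re_le_norm _) h1
  have : (1 + a * z).re = 1 + (a*z).re := by simp
  rw [this]
  cases abs_lt.1 h2; linarith

lemma circ_avg {a : ℂ} (ha : ‖a‖ < 1) :
    ∫ θ in (0:ℝ)..(2*π), Real.log ‖1 + a * Complex.exp (θ * Complex.I)‖ = 0 := by
  set f : ℂ → ℂ := fun z => Complex.log (1 + a * z) with hf
  have hdiff : DifferentiableOn ℂ f (Metric.closedBall 0 1) := by
    intro z hz
    have hz' : ‖z‖ ≤ 1 := by simpa [Metric.mem_closedBall] using hz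
    have : DifferentiableAt ℂ f z := by
      apply DifferentiableAt.comp z (Complex.differentiableAt_log (slit_aux ha hz'))
      fun_prop
    exact this.differentiableWithinAt
  have hcauchy := hdiff.circleIntegral_sub_inv_smul (Metric.mem_ball_self one_pos)
  rw [circleIntegral] at hcauchy
  have h0 : f 0 = 0 := by simp [hf]
  rw [h0, smul_zero] at hcauchy
  have hint : ∀ θ : ℝ, (deriv (circleMap 0 1) θ) • ((circleMap 0 1 θ - 0)⁻¹ • f (circleMap 0 1 θ))
      = Complex.I * f (circleMap 0 1 θ) := by
    intro θ
    have hne : circleMap 0 1 θ ≠ 0 := circleMap_ne_center one_ne_zero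
    rw [deriv_circleMap]
    field_simp [smul_eq_mul]
    simp only [smul_eq_mul, sub_zero]; field_simp
  simp_rw [hint] at hcauchy
  rw [intervalIntegral.integral_const_mul] at hcauchy
  have hI : (∫ θ in (0:ℝ)..(2*π), f (circleMap 0 1 θ)) = 0 := by
    rcases mul_eq_zero.1 hcauchy with h | h
    · exact absurd h Complex.I_ne_zero
    · exact h
  have hcont : Continuous fun θ : ℝ => f (circleMap 0 1 θ) := by
    rw [continuous_iff_continuousAt]
    intro θ
    have h1 : ContinuousAt (fun θ : ℝ => 1 + a * circleMap 0 1 θ) θ := by fun_prop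
    have hm : ‖circleMap 0 1 θ‖ ≤ 1 := by simp [circleMap]
    exact ContinuousAt.comp (g := Complex.log) (f := fun θ : ℝ => 1 + a * circleMap 0 1 θ) (continuousAt_clog (slit_aux ha hm)) h1
  have hre := Complex.reCLM.intervalIntegral_comp_comm (hcont.intervalIntegrable (μ := volume) 0 (2*π))
  have hgoal : (∫ θ in (0:ℝ)..(2*π), Real.log ‖1 + a * Complex.exp (θ * Complex.I)‖)
      = ∫ θ in (0:ℝ)..(2*π), Complex.reCLM (f (circleMap 0 1 θ)) := by
    apply intervalIntegral.integral_congr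
    intro θ _
    simp [hf, circleMap, Complex.log_re]
  rw [hgoal, hre, hI]
  simp

lemma norm_one_add_ge {a : ℂ} (ha : ‖a‖ < 1) (θ : ℝ) :
    1 - ‖a‖ ≤ ‖1 + a * Complex.exp (θ * Complex.I)‖ := by
  have h1 : ‖a * Complex.exp (θ * Complex.I)‖ = ‖a‖ := by
    rw [norm_mul]
    simp
  calc 1 - ‖a‖ = ‖(1:ℂ)‖ - ‖a * Complex.exp (θ * Complex.I)‖ := by rw [h1]; simp
  _ ≤ ‖1 + a * Complex.exp (θ * Complex.I)‖ := by
      have := norm_sub_norm_le (1:ℂ) (-(a * Complex.exp (θ * Complex.I)))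
      simpa [sub_neg_eq_add] using this

lemma cont_aux {a : ℂ} (ha : ‖a‖ < 1) :
    Continuous fun θ : ℝ => Real.log ‖1 + a * Complex.exp (θ * Complex.I)‖ := by
  rw [continuous_iff_continuousAt]
  intro θ
  have h1 : ContinuousAt (fun θ : ℝ => ‖1 + a * Complex.exp (θ * Complex.I)‖) θ := by fun_prop
  have h2 : (0:ℝ) < ‖1 + a * Complex.exp (θ * Complex.I)‖ :=
    lt_of_lt_of_le (by linarith) (norm_one_add_ge ha θ)
  exact ContinuousAt.comp (g := Real.log)
    (f := fun θ : ℝ => ‖1 + a * Complex.exp (θ * Complex.I)‖)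
    (Real.continuousAt_log (ne_of_gt h2)) h1

lemma circ_avg' {a : ℂ} (ha : ‖a‖ < 1) :
    ∫ θ in (-π)..π, Real.log ‖1 + a * Complex.exp (θ * Complex.I)‖ = 0 := by
  have hper : Function.Periodic
      (fun θ : ℝ => Real.log ‖1 + a * Complex.exp (θ * Complex.I)‖) (2*π) := by
    intro θ
    have : Complex.exp ((↑(θ + 2*π)) * Complex.I) = Complex.exp (θ * Complex.I) := by
      push_cast
      rw [add_mul, Complex.exp_add, Complex.exp_two_pi_mul_I, mul_one]
    simp only [this]
  have h := hper.intervalIntegral_add_eq (-π) 0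
  simp only [zero_add] at h
  have h2 : -π + 2*π = π := by ring
  rw [h2] at h
  rw [h, circ_avg ha]

lemma ang_int {t r : ℝ} (ht : 0 < t) (hr : 0 < r) (hne : r ≠ t) :
    (∫ θ in Ioo (-π) π, Real.log ‖1 + ((r:ℂ) * Complex.exp ((θ:ℂ) * Complex.I)) / (t:ℂ)‖)
      = 2*π * max 0 (Real.log (r/t)) := by
  have hts : (t:ℂ) ≠ 0 := Complex.ofReal_ne_zero.2 (ne_of_gt ht)
  have h2 : ∀ θ:ℝ, (1 + ((r:ℂ) * Complex.exp ((θ:ℂ)*Complex.I)) / (t:ℂ))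
      = 1 + ((r/t : ℝ):ℂ) * Complex.exp ((θ:ℂ)*Complex.I) := by
    intro θ; push_cast; field_simp
  rw [← integral_Ioc_eq_integral_Ioo,
    ← intervalIntegral.integral_of_le (by linarith [pi_pos] : -π ≤ π)]
  simp_rw [h2]
  rcases lt_or_gt_of_ne hne with hlt | hgt
  · have ha : ‖((r/t:ℝ):ℂ)‖ < 1 := by
      rw [Complex.norm_real, Real.norm_eq_abs, abs_of_pos (by positivity)]
      rw [div_lt_one ht]; exact hlt
    rw [circ_avg' ha]
    have : Real.log (r/t) ≤ 0 := Real.log_nonpos (by positivity) ((div_le_one ht).2 hlt.le)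
    rw [max_eq_left this, mul_zero]
  · set s : ℝ := r / t with hs
    have hs1 : 1 < s := (one_lt_div ht).2 hgt
    have hs0 : 0 < s := by linarith
    have hainv : ‖((s⁻¹:ℝ):ℂ)‖ < 1 := by
      rw [Complex.norm_real, Real.norm_eq_abs, abs_of_pos (by positivity)]
      exact inv_lt_one_of_one_lt₀ hs1
    have key : ∀ θ : ℝ, Real.log ‖1 + ((s:ℝ):ℂ) * Complex.exp ((θ:ℂ)*Complex.I)‖
        = Real.log s + Real.log ‖1 + ((s⁻¹:ℝ):ℂ) * Complex.exp (((-θ:ℝ):ℂ)*Complex.I)‖ := by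
      intro θ
      have hfact : (1 + ((s:ℝ):ℂ) * Complex.exp ((θ:ℂ)*Complex.I))
          = ((s:ℝ):ℂ) * Complex.exp ((θ:ℂ)*Complex.I)
            * (1 + ((s⁻¹:ℝ):ℂ) * Complex.exp (((-θ:ℝ):ℂ)*Complex.I)) := by
        have hexp : Complex.exp (((-θ:ℝ):ℂ)*Complex.I) = (Complex.exp ((θ:ℂ)*Complex.I))⁻¹ := by
          push_cast
          rw [← Complex.exp_neg]
          ring_nf
        rw [hexp]
        have hene : Complex.exp ((θ:ℂ)*Complex.I) ≠ 0 := Complex.exp_ne_zero _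
        have hsne : ((s:ℝ):ℂ) ≠ 0 := Complex.ofReal_ne_zero.2 (ne_of_gt hs0)
        field_simp
        rw [mul_add, one_div, Complex.ofReal_inv, mul_inv_cancel₀ hsne]; ring
      rw [hfact, norm_mul]
      have hn1 : ‖((s:ℝ):ℂ) * Complex.exp ((θ:ℂ)*Complex.I)‖ = s := by
        rw [norm_mul]
        simp [abs_of_pos hs0]
      rw [hn1]
      have hpos : (0:ℝ) < ‖1 + ((s⁻¹:ℝ):ℂ) * Complex.exp (((-θ:ℝ):ℂ)*Complex.I)‖ := by
        have := norm_one_add_ge hainv (-θ)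
        have h3 : 1 - ‖((s⁻¹:ℝ):ℂ)‖ > 0 := by linarith
        calc (0:ℝ) < 1 - ‖((s⁻¹:ℝ):ℂ)‖ := h3
        _ ≤ _ := by exact_mod_cast this
      exact Real.log_mul (ne_of_gt hs0) (ne_of_gt hpos)
    simp_rw [key]
    have hii : IntervalIntegrable
        (fun θ : ℝ => Real.log ‖1 + ((s⁻¹:ℝ):ℂ) * Complex.exp (((-θ:ℝ):ℂ)*Complex.I)‖)
        volume (-π) π := by
      apply Continuous.intervalIntegrable
      exact (cont_aux hainv).comp continuous_neg
    rw [intervalIntegral.integral_add (intervalIntegrable_const) hii]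
    have hneg : (∫ θ in (-π)..π,
        Real.log ‖1 + ((s⁻¹:ℝ):ℂ) * Complex.exp (((-θ:ℝ):ℂ)*Complex.I)‖) = 0 := by
      have := intervalIntegral.integral_comp_neg
        (fun θ : ℝ => Real.log ‖1 + ((s⁻¹:ℝ):ℂ) * Complex.exp ((θ:ℂ)*Complex.I)‖)
        (a := -π) (b := π)
      rw [neg_neg] at this
      rw [this, circ_avg' hainv]
    rw [hneg, add_zero, intervalIntegral.integral_const]
    have : Real.log s > 0 := Real.log_pos hs1
    rw [max_eq_right this.le]
    rw [smul_eq_mul]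
    ring

lemma log_abs_bound {u v : ℝ} (hu : 0 < u) (hv : 0 < v) (hvu : v^2 ≤ u) :
    |Real.log u| ≤ u + 2/v := by
  have hsu : v ≤ Real.sqrt u := (Real.le_sqrt hv.le (by nlinarith)).2 hvu
  have hsu0 : 0 < Real.sqrt u := lt_of_lt_of_le hv hsu
  have h1 : Real.log u ≤ u := (Real.log_le_sub_one_of_pos hu).trans (by linarith)
  have h2 : -Real.log u ≤ 2/v := by
    have hinv : Real.log (Real.sqrt u)⁻¹ ≤ (Real.sqrt u)⁻¹ - 1 :=
      Real.log_le_sub_one_of_pos (by positivity)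
    rw [Real.log_inv] at hinv
    have hlogsqrt : Real.log (Real.sqrt u) = Real.log u / 2 := Real.log_sqrt hu.le
    have hiv : (Real.sqrt u)⁻¹ ≤ v⁻¹ := by
      apply inv_anti₀ hv hsu
    rw [hlogsqrt] at hinv
    have : v⁻¹ = 1/v := (one_div v).symm
    rw [div_eq_mul_inv]
    nlinarith
  rw [abs_le]
  constructor
  · have : 0 < 2/v := by positivity
    linarith
  · have : 0 < 2/v := by positivity
    linarith

lemma cos_half_pos {θ : ℝ} (hθ : θ ∈ Ioo (-π) π) : (π - |θ|)/π ≤ Real.cos (θ/2) ∧ 0 < Real.cos (θ/2) := by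
  obtain ⟨h1, h2⟩ := hθ
  have habs : |θ| < π := abs_lt.2 ⟨h1, h2⟩
  have hc : Real.cos (θ/2) = Real.cos (|θ|/2) := by
    rcases abs_cases θ with ⟨h, _⟩ | ⟨h, _⟩
    · rw [h]
    · rw [h]; rw [show -θ/2 = -(θ/2) by ring, Real.cos_neg]
  have hb : 1 - 2/π * (|θ|/2) ≤ Real.cos (|θ|/2) :=
    Real.one_sub_mul_le_cos (by positivity) (by linarith)
  have hπ : (0:ℝ) < π := Real.pi_pos
  have heq : 1 - 2/π * (|θ|/2) = (π - |θ|)/π := by field_simp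
  constructor
  · rw [hc, ← heq]; exact hb
  · rw [hc]
    calc (0:ℝ) < (π - |θ|)/π := div_pos (by linarith) hπ
    _ ≤ Real.cos (|θ|/2) := by rw [← heq]; exact hb

lemma norm_sq_lower {s θ : ℝ} (hs : 0 ≤ s) :
    (2 * Real.sqrt s * Real.cos (θ/2))^2 ≤ ‖1 + (s:ℂ) * Complex.exp ((θ:ℂ) * Complex.I)‖^2 := by
  have hexp : Complex.exp ((θ:ℂ) * Complex.I)
      = ((Real.cos θ : ℝ):ℂ) + ((Real.sin θ : ℝ):ℂ) * Complex.I := by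
    rw [Complex.exp_mul_I, ← Complex.ofReal_cos, ← Complex.ofReal_sin]
  rw [hexp]
  rw [Complex.sq_norm, Complex.normSq_apply]
  have hre : (1 + (s:ℂ) * (((Real.cos θ : ℝ):ℂ) + ((Real.sin θ : ℝ):ℂ) * Complex.I)).re
      = 1 + s * Real.cos θ := by
    simp [Complex.cos_ofReal_re, Complex.sin_ofReal_re]
  have him : (1 + (s:ℂ) * (((Real.cos θ : ℝ):ℂ) + ((Real.sin θ : ℝ):ℂ) * Complex.I)).im
      = s * Real.sin θ := by
    simp [Complex.cos_ofReal_re, Complex.sin_ofReal_re, Complex.cos_ofReal_im, Complex.sin_ofReal_im]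
  rw [hre, him]
  have hsq : Real.sqrt s ^ 2 = s := Real.sq_sqrt hs
  have hcos2 : Real.cos θ = 2 * Real.cos (θ/2)^2 - 1 := by
    have := Real.cos_sq (θ/2)
    rw [show 2 * (θ/2) = θ by ring] at this
    nlinarith [this]
  have hpyth : Real.sin θ ^2 + Real.cos θ ^2 = 1 := Real.sin_sq_add_cos_sq θ
  nlinarith [sq_nonneg (1 - s), sq_nonneg (Real.sin θ)]

lemma g2_integrable : IntegrableOn (fun θ : ℝ => (π - |θ|) ^ (-(1/2) : ℝ)) (Ioo (-π) π) := by
  have hπ : (0:ℝ) < π := Real.pi_pos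
  have base : IntervalIntegrable (fun x : ℝ => x ^ (-(1/2) : ℝ)) volume 0 π :=
    intervalIntegrable_rpow' (by norm_num)
  -- on (0, π): (π - θ)^(-1/2)
  have h1 : IntervalIntegrable (fun θ : ℝ => (π - θ) ^ (-(1/2) : ℝ)) volume 0 π := by
    have := (base.comp_sub_left π).symm
    simpa using this
  -- on (-π, 0): (π + θ)^(-1/2)
  have h2 : IntervalIntegrable (fun θ : ℝ => (π + θ) ^ (-(1/2) : ℝ)) volume (-π) 0 := by
    have h3 := (IntervalIntegrable.iff_comp_neg (by simp)).mp h1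
    have h4 : IntervalIntegrable (fun x : ℝ => (π + x) ^ (-(1/2) : ℝ)) volume (-0) (-π) := by
      simpa [sub_neg_eq_add] using h3
    simpa using h4.symm
  have i1 : IntegrableOn (fun θ : ℝ => (π - |θ|) ^ (-(1/2) : ℝ)) (Ioc 0 π) := by
    have := (intervalIntegrable_iff_integrableOn_Ioc_of_le hπ.le).1 h1
    apply this.congr_fun ?_ measurableSet_Ioc
    intro θ hθ
    have : |θ| = θ := abs_of_pos hθ.1
    simp [this]
  have i2 : IntegrableOn (fun θ : ℝ => (π - |θ|) ^ (-(1/2) : ℝ)) (Ioc (-π) 0) := by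
    have := (intervalIntegrable_iff_integrableOn_Ioc_of_le (by linarith)).1 h2
    apply this.congr_fun ?_ measurableSet_Ioc
    intro θ hθ
    have : |θ| = -θ := abs_of_nonpos hθ.2
    simp [this, sub_neg_eq_add]
  have : IntegrableOn (fun θ : ℝ => (π - |θ|) ^ (-(1/2) : ℝ)) (Ioc (-π) 0 ∪ Ioc 0 π) :=
    i2.union i1
  apply this.mono_set
  intro θ hθ
  rcases le_or_gt θ 0 with h | h
  · exact Or.inl ⟨hθ.1, h⟩
  · exact Or.inr ⟨h, hθ.2.le⟩

lemma intOn_rpow_gauss {s : ℝ} (hs : -1 < s) :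
    IntegrableOn (fun r : ℝ => r ^ s * Real.exp (-r^2)) (Ioi 0) := by
  have := integrableOn_rpow_mul_exp_neg_mul_sq (b := 1) one_pos hs
  simpa using this

lemma H_integrable {t : ℝ} (ht : 0 < t) :
    IntegrableOn (fun p : ℝ × ℝ =>
      p.1 * (Real.log ‖1 + ((p.1:ℂ) * Complex.exp ((p.2:ℂ) * Complex.I)) / (t:ℂ)‖
        * ((1/π) * Real.exp (-p.1^2))))
      (Ioi (0:ℝ) ×ˢ Ioo (-π) π) (volume : Measure (ℝ×ℝ)) := by
  have hπ : (0:ℝ) < π := Real.pi_pos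
  set f1 : ℝ → ℝ := fun r => (1/π) * (r * Real.exp (-r^2) * (1 + r/t)) with hf1def
  set c3 : ℝ := (1/π) * Real.sqrt 2 * (Real.sqrt (Real.sqrt t) * Real.sqrt π) with hc3def
  set f3 : ℝ → ℝ := fun r => c3 * (r / Real.sqrt (Real.sqrt r) * Real.exp (-r^2)) with hf3def
  set g2b : ℝ → ℝ := fun θ => (π - |θ|) ^ (-(1/2) : ℝ) with hg2def
  -- integrability of f1 on Ioi 0
  have hf1 : IntegrableOn f1 (Ioi 0) := by
    have h1 : IntegrableOn (fun r : ℝ => r ^ (1:ℝ) * Real.exp (-r^2)) (Ioi 0) :=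
      intOn_rpow_gauss (by norm_num)
    have h2 : IntegrableOn (fun r : ℝ => r ^ (2:ℝ) * Real.exp (-r^2)) (Ioi 0) :=
      intOn_rpow_gauss (by norm_num)
    have : IntegrableOn (fun r : ℝ =>
        (1/π) * (r ^ (1:ℝ) * Real.exp (-r^2)) + (1/(π*t)) * (r ^ (2:ℝ) * Real.exp (-r^2)))
        (Ioi 0) := (h1.const_mul _).add (h2.const_mul _)
    apply IntegrableOn.congr_fun this ?_ measurableSet_Ioi
    intro r hr
    have hr0 : (0:ℝ) < r := hr
    simp only [hf1def]
    rw [Real.rpow_one, Real.rpow_two]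
    field_simp
  have hf3 : IntegrableOn f3 (Ioi 0) := by
    have h1 : IntegrableOn (fun r : ℝ => r ^ (3/4:ℝ) * Real.exp (-r^2)) (Ioi 0) :=
      intOn_rpow_gauss (by norm_num)
    have h1c : IntegrableOn (fun r : ℝ => c3 * (r ^ (3/4:ℝ) * Real.exp (-r^2))) (Ioi 0) :=
      h1.const_mul c3
    apply IntegrableOn.congr_fun h1c ?_ measurableSet_Ioi
    intro r hr
    have hr0 : (0:ℝ) < r := hr
    have h4 : Real.sqrt (Real.sqrt r) = r ^ ((1/4):ℝ) := by
      rw [Real.sqrt_eq_rpow, Real.sqrt_eq_rpow, ← Real.rpow_mul hr0.le]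
      norm_num
    simp only [hf3def]
    rw [h4]
    have : r / r ^ ((1/4):ℝ) = r ^ (3/4:ℝ) := by
      rw [div_eq_iff (by positivity), ← Real.rpow_add hr0]
      norm_num
    rw [this]
  -- integrability of the dominating function on the product
  have hSmeas : MeasurableSet (Ioi (0:ℝ) ×ˢ Ioo (-π) π) :=
    measurableSet_Ioi.prod measurableSet_Ioo
  set B : ℝ × ℝ → ℝ := fun p => f1 p.1 + f3 p.1 * g2b p.2 with hBdef
  have hBint : IntegrableOn B (Ioi (0:ℝ) ×ˢ Ioo (-π) π) := by
    rw [IntegrableOn, Measure.volume_eq_prod ℝ ℝ, ← Measure.prod_restrict]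
    have hone : Integrable (fun _ : ℝ => (1:ℝ)) (volume.restrict (Ioo (-π) π)) := by
      rw [← IntegrableOn]
      refine integrableOn_const ?_ (by simp)
      rw [Real.volume_Ioo]
      exact ENNReal.ofReal_ne_top
    have hp1 : Integrable (fun p : ℝ × ℝ => f1 p.1 * 1)
        ((volume.restrict (Ioi 0)).prod (volume.restrict (Ioo (-π) π))) :=
      Integrable.mul_prod hf1 hone
    have hp2 : Integrable (fun p : ℝ × ℝ => f3 p.1 * g2b p.2)
        ((volume.restrict (Ioi 0)).prod (volume.restrict (Ioo (-π) π))) :=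
      Integrable.mul_prod hf3 g2_integrable
    have := (hp1.add hp2)
    simpa [hBdef, Pi.add_def] using this
  -- measurability of the integrand
  have hmeas : AEStronglyMeasurable (fun p : ℝ × ℝ =>
      p.1 * (Real.log ‖1 + ((p.1:ℂ) * Complex.exp ((p.2:ℂ) * Complex.I)) / (t:ℂ)‖
        * ((1/π) * Real.exp (-p.1^2))))
      (volume.restrict (Ioi (0:ℝ) ×ˢ Ioo (-π) π)) := by
    apply Measurable.aestronglyMeasurable
    apply Measurable.mul measurable_fst
    apply Measurable.mul
    · apply Real.measurable_log.comp
      have : Continuous (fun p : ℝ × ℝ =>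
          ‖1 + ((p.1:ℂ) * Complex.exp ((p.2:ℂ) * Complex.I)) / (t:ℂ)‖) := by fun_prop
      exact this.measurable
    · fun_prop
  -- the bound
  apply Integrable.mono' hBint hmeas
  rw [ae_restrict_iff' hSmeas]
  apply Filter.Eventually.of_forall
  rintro ⟨r, θ⟩ hp
  obtain ⟨hr, hθ⟩ := hp
  have hr0 : (0:ℝ) < r := hr
  set s : ℝ := r / t with hsdef
  have hs0 : 0 < s := by positivity
  have h2 : (1 + ((r:ℂ) * Complex.exp ((θ:ℂ)*Complex.I)) / (t:ℂ))
      = 1 + ((s:ℝ):ℂ) * Complex.exp ((θ:ℂ)*Complex.I) := by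
    have hts : (t:ℂ) ≠ 0 := Complex.ofReal_ne_zero.2 (ne_of_gt ht)
    simp only [hsdef]
    push_cast
    field_simp
  set u : ℝ := ‖1 + ((s:ℝ):ℂ) * Complex.exp ((θ:ℂ) * Complex.I)‖ with hudef
  set c : ℝ := Real.cos (θ/2) with hcdef
  obtain ⟨hclow, hcpos⟩ := cos_half_pos hθ
  have hmlow : 2 * Real.sqrt s * c ≤ u := by
    have h := norm_sq_lower (s := s) (θ := θ) hs0.le
    have hu0 : 0 ≤ u := norm_nonneg _
    have hm0 : 0 ≤ 2 * Real.sqrt s * c := by positivity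
    nlinarith
  have hmpos : 0 < 2 * Real.sqrt s * c := by positivity
  have hu0 : 0 < u := lt_of_lt_of_le hmpos hmlow
  set v : ℝ := Real.sqrt (2 * Real.sqrt s * c) with hvdef
  have hv0 : 0 < v := Real.sqrt_pos.2 hmpos
  have hv2 : v^2 ≤ u := by
    rw [hvdef, Real.sq_sqrt hmpos.le]
    exact hmlow
  have hlog := log_abs_bound hu0 hv0 hv2
  have huup : u ≤ 1 + s := by
    calc u ≤ ‖(1:ℂ)‖ + ‖((s:ℝ):ℂ) * Complex.exp ((θ:ℂ) * Complex.I)‖ := norm_add_le _ _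
    _ = 1 + s := by
        rw [norm_mul]
        simp [abs_of_pos hs0]
  -- 2/v bound
  set X : ℝ := Real.sqrt (Real.sqrt s) with hXdef
  set Y : ℝ := Real.sqrt c with hYdef
  have hX0 : 0 < X := Real.sqrt_pos.2 (Real.sqrt_pos.2 hs0)
  have hY0 : 0 < Y := Real.sqrt_pos.2 hcpos
  have hvsplit : v = Real.sqrt 2 * X * Y := by
    rw [hvdef, Real.sqrt_mul (by positivity), Real.sqrt_mul (by norm_num)]
  have hss : X = Real.sqrt (Real.sqrt r) / Real.sqrt (Real.sqrt t) := by
    rw [hXdef, hsdef, Real.sqrt_div hr0.le, Real.sqrt_div (Real.sqrt_nonneg r)]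
  have hXinv : X⁻¹ = Real.sqrt (Real.sqrt t) / Real.sqrt (Real.sqrt r) := by
    rw [hss]
    rw [inv_div]
  have h22 : Real.sqrt 2 * Real.sqrt 2 = 2 := Real.mul_self_sqrt (by norm_num)
  have hs2 : (0:ℝ) < Real.sqrt 2 := by positivity
  have h2s : 2 * (Real.sqrt 2)⁻¹ = Real.sqrt 2 := by
    rw [← h22]; field_simp; rw [Real.sqrt_sq hs2.le]
  have h2v : 2 / v = Real.sqrt 2 * X⁻¹ * Y⁻¹ := by
    calc 2 / v = 2 * v⁻¹ := div_eq_mul_inv _ _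
    _ = 2 * (Real.sqrt 2)⁻¹ * X⁻¹ * Y⁻¹ := by rw [hvsplit, mul_inv, mul_inv]; ring
    _ = Real.sqrt 2 * X⁻¹ * Y⁻¹ := by rw [h2s]
  -- Y⁻¹ ≤ √π * g2b θ
  have hg2bval : g2b θ = (Real.sqrt (π - |θ|))⁻¹ := by
    have hθpos : (0:ℝ) ≤ π - |θ| := by
      obtain ⟨ha, hb⟩ := hθ
      have : |θ| ≤ π := by
        rw [abs_le]; constructor <;> linarith
      linarith
    rw [hg2def]
    simp only []
    rw [Real.rpow_neg hθpos, Real.sqrt_eq_rpow]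
  have hYbound : Y⁻¹ ≤ Real.sqrt π * g2b θ := by
    have h1 : Real.sqrt ((π - |θ|)/π) ≤ Y := by
      rw [hYdef]
      exact Real.sqrt_le_sqrt hclow
    have h2' : Real.sqrt ((π - |θ|)/π) = Real.sqrt (π - |θ|) / Real.sqrt π := by
      rw [Real.sqrt_div ?_]
      obtain ⟨ha, hb⟩ := hθ
      have : |θ| < π := abs_lt.2 ⟨ha, hb⟩
      linarith
    have hθlt : |θ| < π := abs_lt.2 ⟨hθ.1, hθ.2⟩
    have hppos : (0:ℝ) < π - |θ| := by linarith
    have h3 : 0 < Real.sqrt (π - |θ|) / Real.sqrt π := by positivity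
    have h4 : Y⁻¹ ≤ (Real.sqrt (π - |θ|) / Real.sqrt π)⁻¹ := by
      apply inv_anti₀ h3
      rw [← h2']; exact h1
    calc Y⁻¹ ≤ (Real.sqrt (π - |θ|) / Real.sqrt π)⁻¹ := h4
    _ = Real.sqrt π * (Real.sqrt (π - |θ|))⁻¹ := by
        rw [inv_div]; ring
    _ = Real.sqrt π * g2b θ := by rw [hg2bval]
  have h2vbound : 2 / v ≤ Real.sqrt 2 * (Real.sqrt (Real.sqrt t) / Real.sqrt (Real.sqrt r))
      * (Real.sqrt π * g2b θ) := by
    rw [h2v, hXinv]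
    apply mul_le_mul_of_nonneg_left hYbound
    positivity
  have hlog2 : |Real.log u| ≤ (1 + s) + Real.sqrt 2
      * (Real.sqrt (Real.sqrt t) / Real.sqrt (Real.sqrt r)) * (Real.sqrt π * g2b θ) := by
    calc |Real.log u| ≤ u + 2/v := hlog
    _ ≤ (1 + s) + 2/v := by linarith
    _ ≤ _ := by linarith
  -- final assembly
  have hrw : ‖1 + ((r:ℂ) * Complex.exp ((θ:ℂ)*Complex.I)) / (t:ℂ)‖ = u := by rw [h2]
  simp only [Real.norm_eq_abs]
  rw [hrw]
  have habs : |r * (Real.log u * ((1/π) * Real.exp (-r^2)))|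
      = r * ((1/π) * Real.exp (-r^2)) * |Real.log u| := by
    rw [abs_mul, abs_mul, abs_mul, abs_of_pos hr0,
      abs_of_pos (by positivity : (0:ℝ) < 1/π), abs_of_pos (Real.exp_pos _)]
    ring
  rw [habs]
  calc r * ((1/π) * Real.exp (-r^2)) * |Real.log u|
      ≤ r * ((1/π) * Real.exp (-r^2)) * ((1 + s) + Real.sqrt 2
        * (Real.sqrt (Real.sqrt t) / Real.sqrt (Real.sqrt r)) * (Real.sqrt π * g2b θ)) :=
      mul_le_mul_of_nonneg_left hlog2 (by positivity)
  _ = B (r, θ) := by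
      simp only [hBdef, hf1def, hf3def, hc3def, hsdef]
      ring

lemma gauss_decay : Tendsto (fun r : ℝ => Real.exp (-(1/2) * r)) atTop (nhds 0) := by
  have h1 : Tendsto (fun r : ℝ => (1/2) * r) atTop atTop :=
    Filter.tendsto_id.const_mul_atTop (by norm_num)
  have := Real.tendsto_exp_neg_atTop_nhds_zero.comp h1
  apply this.congr
  intro x
  simp [neg_mul]

lemma tendsto_mul_exp_neg_sq : Tendsto (fun r : ℝ => r * Real.exp (-r^2)) atTop (nhds 0) := by
  have h := (rpow_mul_exp_neg_mul_sq_isLittleO_exp_neg one_pos 1).trans_tendsto gauss_decay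
  apply h.congr'
  filter_upwards [Filter.eventually_gt_atTop (0:ℝ)] with r hr
  rw [Real.rpow_one]
  norm_num

lemma tendsto_exp_neg_sq : Tendsto (fun r : ℝ => Real.exp (-r^2)) atTop (nhds 0) := by
  have h1 : Tendsto (fun r : ℝ => r^2) atTop atTop := tendsto_pow_atTop (by norm_num)
  have h2 : Tendsto (fun r : ℝ => -r^2) atTop atBot := tendsto_neg_atTop_atBot.comp h1
  exact Real.tendsto_exp_atBot.comp h2

variable {t : ℝ}

lemma intOn_gauss_Ioi (ht : 0 < t) {s : ℝ} (hs : -1 < s) :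
    IntegrableOn (fun r : ℝ => r ^ s * Real.exp (-r^2)) (Ioi t) := by
  have := integrableOn_rpow_mul_exp_neg_mul_sq (b := 1) one_pos hs
  have h2 : IntegrableOn (fun r : ℝ => r ^ s * Real.exp (-r^2)) (Ioi 0) := by simpa using this
  exact h2.mono_set (Ioi_subset_Ioi ht.le)

lemma R1 (ht : 0 < t) :
    IntegrableOn (fun r : ℝ => 2*r*Real.exp (-r^2)*(Real.log r - Real.log t)) (Ioi t) := by
  have hg : IntegrableOn (fun r : ℝ => (2/t) * (r ^ (2:ℝ) * Real.exp (-r^2))) (Ioi t) :=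
    (intOn_gauss_Ioi ht (by norm_num)).const_mul _
  apply Integrable.mono' hg
  · apply Measurable.aestronglyMeasurable
    apply Measurable.mul
    · fun_prop
    · exact (Real.measurable_log.sub measurable_const)
  · rw [ae_restrict_iff' measurableSet_Ioi]
    apply Filter.Eventually.of_forall
    intro r hr
    have hrt : t < r := hr
    have hr0 : 0 < r := lt_trans ht hrt
    have hlog : 0 ≤ Real.log r - Real.log t := by
      have := Real.log_le_log ht hrt.le
      linarith
    have hlogup : Real.log r - Real.log t ≤ r / t := by
      rw [← Real.log_div (ne_of_gt hr0) (ne_of_gt ht)]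
      have h1 : Real.log (r/t) ≤ r/t - 1 := Real.log_le_sub_one_of_pos (by positivity)
      linarith
    rw [Real.norm_eq_abs, abs_of_nonneg (by positivity)]
    rw [Real.rpow_two]
    have hexp : 0 < Real.exp (-r^2) := Real.exp_pos _
    calc 2*r*Real.exp (-r^2)*(Real.log r - Real.log t) ≤ 2*r*Real.exp (-r^2)*(r/t) := by
          apply mul_le_mul_of_nonneg_left hlogup (by positivity)
    _ = (2/t) * (r^2 * Real.exp (-r^2)) := by ring

lemma R2 (ht : 0 < t) :
    IntegrableOn (fun r : ℝ => Real.exp (-r^2) * r⁻¹) (Ioi t) := by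
  have hg : IntegrableOn (fun r : ℝ => t⁻¹ * Real.exp (-(1:ℝ)*r^2)) (Ioi t) :=
    ((integrable_exp_neg_mul_sq one_pos).integrableOn.mono_set (subset_univ _)).const_mul _
  apply Integrable.mono' hg
  · apply Measurable.aestronglyMeasurable; fun_prop
  · rw [ae_restrict_iff' measurableSet_Ioi]
    apply Filter.Eventually.of_forall
    intro r hr
    have hrt : t < r := hr
    have hr0 : 0 < r := lt_trans ht hrt
    rw [Real.norm_eq_abs, abs_of_nonneg (by positivity)]
    have : r⁻¹ ≤ t⁻¹ := by
      apply inv_anti₀ ht hrt.le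
    calc Real.exp (-r^2) * r⁻¹ ≤ Real.exp (-r^2) * t⁻¹ :=
          mul_le_mul_of_nonneg_left this (Real.exp_pos _).le
    _ = t⁻¹ * Real.exp (-(1:ℝ)*r^2) := by rw [neg_mul, one_mul]; ring

lemma R3 (ht : 0 < t) :
    IntegrableOn (fun r : ℝ => r * Real.exp (-r^2) * (r^2+2)/(r^2+1)^2) (Ioi t) := by
  have hg : IntegrableOn (fun r : ℝ => (2:ℝ) * (r ^ (1:ℝ) * Real.exp (-r^2))) (Ioi t) :=
    (intOn_gauss_Ioi ht (by norm_num)).const_mul _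
  apply Integrable.mono' hg
  · apply Measurable.aestronglyMeasurable; fun_prop
  · rw [ae_restrict_iff' measurableSet_Ioi]
    apply Filter.Eventually.of_forall
    intro r hr
    have hrt : t < r := hr
    have hr0 : 0 < r := lt_trans ht hrt
    rw [Real.norm_eq_abs, abs_of_nonneg (by positivity), Real.rpow_one]
    rw [div_le_iff₀ (by positivity)]
    have hexp : 0 < Real.exp (-r^2) := Real.exp_pos _
    nlinarith [sq_nonneg r, sq_nonneg (r^2), hexp.le, mul_pos hr0 hexp]

lemma E1 (ht : 0 < t) :
    (∫ r in Ioi t, (2*r*Real.exp (-r^2)*(Real.log r - Real.log t) - Real.exp (-r^2) * r⁻¹))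
      = 0 := by
  have hderiv : ∀ r ∈ Ioi t, HasDerivAt (fun r : ℝ => -Real.exp (-r^2) * (Real.log r - Real.log t))
      (2*r*Real.exp (-r^2)*(Real.log r - Real.log t) - Real.exp (-r^2) * r⁻¹) r := by
    intro r hr
    have hr0 : 0 < r := lt_trans ht hr
    have h1 : HasDerivAt (fun r : ℝ => -Real.exp (-r^2)) (2*r*Real.exp (-r^2)) r := by
      have ha : HasDerivAt (fun r : ℝ => -r^2) (-(2*r)) r := by
        have := (hasDerivAt_pow 2 r).neg
        exact (by simpa using this : HasDerivAt (-fun x : ℝ => x^2) (-(2*r)) r)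
      have hb := (Real.hasDerivAt_exp (-r^2)).comp r ha
      have hc := hb.neg
      refine hc.congr_deriv ?_
      ring
    have h2 : HasDerivAt (fun r : ℝ => Real.log r - Real.log t) r⁻¹ r := by
      simpa using (Real.hasDerivAt_log (ne_of_gt hr0)).sub_const (Real.log t)
    have := h1.mul h2
    refine this.congr_deriv ?_
    ring
  have hint : IntegrableOn (fun r : ℝ =>
      2*r*Real.exp (-r^2)*(Real.log r - Real.log t) - Real.exp (-r^2) * r⁻¹) (Ioi t) :=
    (R1 ht).sub (R2 ht)
  have htend : Tendsto (fun r : ℝ => -Real.exp (-r^2) * (Real.log r - Real.log t))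
      atTop (nhds 0) := by
    have hub : ∀ᶠ r in atTop, ‖-Real.exp (-r^2) * (Real.log r - Real.log t)‖
        ≤ r * Real.exp (-r^2) + Real.exp (-r^2) * |Real.log t| := by
      filter_upwards [Filter.eventually_gt_atTop (max 0 1)] with r hr
      have hr0 : (0:ℝ) < r := lt_of_le_of_lt (le_max_left 0 1) hr
      have hexp : 0 < Real.exp (-r^2) := Real.exp_pos _
      rw [norm_mul, norm_neg, Real.norm_eq_abs, Real.norm_eq_abs, abs_of_pos hexp]
      have hlogr : |Real.log r| ≤ r := by
        rw [abs_of_nonneg (Real.log_nonneg (le_of_lt (lt_of_le_of_lt (le_max_right 0 1) hr)))]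
        have := Real.log_le_sub_one_of_pos hr0
        linarith
      have habs : |Real.log r - Real.log t| ≤ r + |Real.log t| := by
        calc |Real.log r - Real.log t| ≤ |Real.log r| + |Real.log t| := abs_sub _ _
        _ ≤ r + |Real.log t| := by linarith
      calc Real.exp (-r^2) * |Real.log r - Real.log t|
          ≤ Real.exp (-r^2) * (r + |Real.log t|) :=
            mul_le_mul_of_nonneg_left habs hexp.le
      _ = r * Real.exp (-r^2) + Real.exp (-r^2) * |Real.log t| := by ring
    have hg : Tendsto (fun r : ℝ => r * Real.exp (-r^2) + Real.exp (-r^2) * |Real.log t|)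
        atTop (nhds 0) := by
      have := tendsto_mul_exp_neg_sq.add (tendsto_exp_neg_sq.mul_const |Real.log t|)
      simpa using this
    exact squeeze_zero_norm' hub hg
  have := MeasureTheory.integral_Ioi_of_hasDerivAt_of_tendsto ?_ hderiv hint htend
  · rw [this]
    simp
  · have : ContinuousAt (fun r : ℝ => -Real.exp (-r^2) * (Real.log r - Real.log t)) t := by
      have h1 : ContinuousAt Real.log t := Real.continuousAt_log (ne_of_gt ht)
      fun_prop (disch := exact ne_of_gt ht)
    exact this.continuousWithinAt

lemma E2 (ht : 0 < t) :
    (∫ r in Ioi t, r * Real.exp (-r^2) * (r^2+2)/(r^2+1)^2)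
      = Real.exp (-t^2) / (2*(t^2+1)) := by
  have hderiv : ∀ r ∈ Ioi t, HasDerivAt (fun r : ℝ => -Real.exp (-r^2) / (2*(r^2+1)))
      (r * Real.exp (-r^2) * (r^2+2)/(r^2+1)^2) r := by
    intro r hr
    have h1 : HasDerivAt (fun r : ℝ => -Real.exp (-r^2)) (2*r*Real.exp (-r^2)) r := by
      have ha : HasDerivAt (fun r : ℝ => -r^2) (-(2*r)) r := by
        exact (by simpa using (hasDerivAt_pow 2 r).neg : HasDerivAt (-fun x : ℝ => x^2) (-(2*r)) r)
      have hb := ((Real.hasDerivAt_exp (-r^2)).comp r ha).neg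
      refine hb.congr_deriv ?_
      ring
    have h2 : HasDerivAt (fun r : ℝ => 2*(r^2+1)) (2*(2*r)) r := by
      have := ((hasDerivAt_pow 2 r).add_const 1).const_mul 2
      simpa using this
    have hne : (2*(r^2+1) : ℝ) ≠ 0 := by positivity
    have := h1.div h2 hne
    refine this.congr_deriv ?_
    field_simp
    ring
  have htend : Tendsto (fun r : ℝ => -Real.exp (-r^2) / (2*(r^2+1))) atTop (nhds 0) := by
    have hub : ∀ᶠ r in atTop, ‖-Real.exp (-r^2) / (2*(r^2+1))‖ ≤ Real.exp (-r^2) := by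
      apply Filter.Eventually.of_forall
      intro r
      rw [norm_div, norm_neg, Real.norm_eq_abs, Real.norm_eq_abs,
        abs_of_pos (Real.exp_pos _)]
      have h1 : (1:ℝ) ≤ |2*(r^2+1)| := by
        rw [abs_of_pos (by positivity)]
        nlinarith [sq_nonneg r]
      calc Real.exp (-r^2) / |2*(r^2+1)| ≤ Real.exp (-r^2) / 1 := by
            apply div_le_div_of_nonneg_left (Real.exp_pos _).le one_pos h1
      _ = Real.exp (-r^2) := by ring
    exact squeeze_zero_norm' hub tendsto_exp_neg_sq
  have := MeasureTheory.integral_Ioi_of_hasDerivAt_of_tendsto ?_ hderiv (R3 ht) htend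
  · rw [this]
    rw [zero_sub, neg_div, neg_neg]
  · have : ContinuousAt (fun r : ℝ => -Real.exp (-r^2) / (2*(r^2+1))) t := by
      have hne : (2*(t^2+1) : ℝ) ≠ 0 := by positivity
      fun_prop (disch := assumption)
    exact this.continuousWithinAt

lemma E3 (ht : 0 < t) :
    Real.exp (-t^2) / (2*(t^2+1)) < ∫ r in Ioi t, Real.exp (-r^2) * r⁻¹ := by
  have key : 0 < ∫ r in Ioi t, (Real.exp (-r^2) * r⁻¹ - r * Real.exp (-r^2) * (r^2+2)/(r^2+1)^2) := by
    have hint : IntegrableOn (fun r : ℝ =>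
        Real.exp (-r^2) * r⁻¹ - r * Real.exp (-r^2) * (r^2+2)/(r^2+1)^2) (Ioi t) :=
      (R2 ht).sub (R3 ht)
    have hpos : ∀ r ∈ Ioi t, 0 < Real.exp (-r^2) * r⁻¹ - r * Real.exp (-r^2) * (r^2+2)/(r^2+1)^2 := by
      intro r hr
      have hr0 : 0 < r := lt_trans ht hr
      have hexp : 0 < Real.exp (-r^2) := Real.exp_pos _
      rw [sub_pos, div_lt_iff₀ (by positivity)]
      have hkey : r * (r^2+2) * r < (r^2+1)^2 := by nlinarith
      calc r * Real.exp (-r^2) * (r^2+2) = (r * (r^2+2)) * Real.exp (-r^2) := by ring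
      _ < ((r^2+1)^2 * r⁻¹) * Real.exp (-r^2) := by
          apply mul_lt_mul_of_pos_right ?_ hexp
          rw [lt_mul_inv_iff₀ hr0]
          nlinarith
      _ = Real.exp (-r^2) * r⁻¹ * (r^2+1)^2 := by ring
    have hae : (0:ℝ → ℝ) ≤ᶠ[ae (volume.restrict (Ioi t))] (fun r : ℝ =>
        Real.exp (-r^2) * r⁻¹ - r * Real.exp (-r^2) * (r^2+2)/(r^2+1)^2) := by
      rw [EventuallyLE, ae_restrict_iff' measurableSet_Ioi]
      apply Filter.Eventually.of_forall
      intro r hr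
      exact (hpos r hr).le
    rw [MeasureTheory.setIntegral_pos_iff_support_of_nonneg_ae hae hint]
    have hsub : Ioi t ⊆ Function.support (fun r : ℝ =>
        Real.exp (-r^2) * r⁻¹ - r * Real.exp (-r^2) * (r^2+2)/(r^2+1)^2) ∩ Ioi t := by
      intro r hr
      exact ⟨ne_of_gt (hpos r hr), hr⟩
    refine lt_of_lt_of_le ?_ (measure_mono hsub)
    rw [Real.volume_Ioi]
    exact ENNReal.zero_lt_top
  have hsub := MeasureTheory.integral_sub (R2 ht) (R3 ht)
  rw [hsub] at key
  rw [← E2 ht]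
  linarith

/-- For a standard complex Gaussian ζ and t > 0,
`E[log|1 + ζ/t|] > e^{-t²}/(2(t²+1))`. -/
theorem hole_prob_stmt_3 (t : ℝ) (ht : 0 < t) :
    (∫ z : ℂ, Real.log ‖1 + z / (t : ℂ)‖ * ((1 / π) * Real.exp (-‖z‖ ^ 2))) >
      Real.exp (-t ^ 2) / (2 * (t ^ 2 + 1)) := by
  set F : ℂ → ℝ := fun z => Real.log ‖1 + z / (t : ℂ)‖ * ((1 / π) * Real.exp (-‖z‖ ^ 2))
    with hFdef
  set H : ℝ × ℝ → ℝ := fun p =>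
      p.1 * (Real.log ‖1 + ((p.1:ℂ) * Complex.exp ((p.2:ℂ) * Complex.I)) / (t:ℂ)‖
        * ((1/π) * Real.exp (-p.1^2))) with hHdef
  have hHG : (fun p : ℝ × ℝ => p.1 • F (Complex.polarCoord.symm p)) = H := by
    funext p
    have hsymm : Complex.polarCoord.symm p = (p.1:ℂ) * Complex.exp ((p.2:ℂ) * Complex.I) := by
      rw [Complex.polarCoord_symm_apply, Complex.exp_mul_I, ← Complex.ofReal_cos,
        ← Complex.ofReal_sin]
    have hnorm : ‖Complex.polarCoord.symm p‖ ^ 2 = p.1 ^ 2 := by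
      rw [Complex.norm_polarCoord_symm, sq_abs]
    simp only [hHdef, hFdef, smul_eq_mul]
    rw [hnorm, hsymm]
  have hpolar := Complex.integral_comp_polarCoord_symm F
  rw [← hpolar, hHG]
  have htarget : polarCoord.target = Ioi (0:ℝ) ×ˢ Ioo (-π) π := rfl
  rw [htarget]
  have hfub : (∫ p in Ioi (0:ℝ) ×ˢ Ioo (-π) π, H p)
      = ∫ r in Ioi (0:ℝ), ∫ θ in Ioo (-π) π, H (r, θ) := by
    rw [Measure.volume_eq_prod ℝ ℝ]
    apply MeasureTheory.setIntegral_prod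
    rw [← Measure.volume_eq_prod ℝ ℝ]
    exact H_integrable ht
  rw [hfub]
  set φ : ℝ → ℝ := fun r =>
      (r * ((1/π) * Real.exp (-r^2))) * (2*π* max 0 (Real.log (r/t))) with hφdef
  have hinner : ∫ r in Ioi (0:ℝ), (fun r => ∫ θ in Ioo (-π) π, H (r, θ)) r
      = ∫ r in Ioi (0:ℝ), φ r := by
    apply MeasureTheory.setIntegral_congr_ae measurableSet_Ioi
    have hne : ∀ᵐ r ∂(volume : Measure ℝ), r ≠ t := by
      have hset : {a : ℝ | ¬ a ≠ t} = {t} := by ext a; simp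
      rw [ae_iff, hset]
      exact measure_singleton t
    filter_upwards [hne] with r hrne hr0
    have hstep : (fun θ : ℝ => H (r, θ)) = fun θ : ℝ =>
        (r * ((1/π) * Real.exp (-r^2)))
          * Real.log ‖1 + ((r:ℂ) * Complex.exp ((θ:ℂ) * Complex.I)) / (t:ℂ)‖ := by
      funext θ
      simp only [hHdef]
      ring
    rw [hstep, MeasureTheory.integral_const_mul, ang_int ht hr0 hrne, hφdef]
  rw [hinner]
  -- split the radial integral
  have hsplit : Ioi (0:ℝ) = Ioc 0 t ∪ Ioi t := (Ioc_union_Ioi_eq_Ioi ht.le).symm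
  have hφ1 : EqOn φ 0 (Ioc 0 t) := by
    intro r hr
    have h1 : Real.log (r/t) ≤ 0 :=
      Real.log_nonpos (div_nonneg hr.1.le ht.le) ((div_le_one ht).2 hr.2)
    simp only [hφdef, Pi.zero_apply]
    rw [max_eq_left h1]
    ring
  have hφ2 : EqOn φ (fun r => 2*r*Real.exp (-r^2)*(Real.log r - Real.log t)) (Ioi t) := by
    intro r hr
    have hr0 : 0 < r := lt_trans ht hr
    have h1 : 0 < Real.log (r/t) := Real.log_pos ((one_lt_div ht).2 hr)
    have h2 : Real.log (r/t) = Real.log r - Real.log t := Real.log_div (ne_of_gt hr0) (ne_of_gt ht)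
    simp only [hφdef]
    rw [max_eq_right h1.le, h2]
    field_simp
  have hint1 : IntegrableOn φ (Ioc 0 t) := by
    apply IntegrableOn.congr_fun (integrableOn_zero) ?_ measurableSet_Ioc
    intro r hr
    exact (hφ1 hr).symm
  have hint2 : IntegrableOn φ (Ioi t) := by
    apply IntegrableOn.congr_fun (R1 ht) ?_ measurableSet_Ioi
    intro r hr
    exact (hφ2 hr).symm
  rw [hsplit, MeasureTheory.setIntegral_union (Ioc_disjoint_Ioi le_rfl) measurableSet_Ioi
    hint1 hint2]
  have hzero : (∫ r in Ioc 0 t, φ r) = 0 := by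
    rw [MeasureTheory.setIntegral_congr_fun measurableSet_Ioc hφ1]
    simp
  have hmain : (∫ r in Ioi t, φ r)
      = ∫ r in Ioi t, 2*r*Real.exp (-r^2)*(Real.log r - Real.log t) :=
    MeasureTheory.setIntegral_congr_fun measurableSet_Ioi hφ2
  rw [hzero, hmain, zero_add]
  have hE1 := E1 ht
  rw [MeasureTheory.integral_sub (R1 ht) (R2 ht), sub_eq_zero] at hE1
  rw [hE1]
  exact E3 ht
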